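/- Let μ be a nonzero r̄-eigenmeasure of r̃+J̃, where r̄ = max_{x∈S} r(x), and let μ = μ^s + h·Leb be its Lebesgue decomposition with h ∈ L¹(S) and μ^s singular with respect to Lebesgue measure. Then μ^s(S ∖ Σ) = 0, where Σ = {x ∈ S : r(x) = r̄}; that is, either μ^s = 0 or μ^s is concentrated on Σ. -/

import Mathlib

open MeasureTheory Filter Topology

/-- A finite positive Borel measure μ on S is a λ-eigenmeasure of the operator r̃+J̃ if for
every Borel set A ⊆ S one has ∫_A r dμ + ∫_A (∫_S K(y,x) μ(dy)) dx = λ μ(A). -/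
def IsEigenmeasure {d : ℕ} (S : Set (EuclideanSpace ℝ (Fin d)))
    (r : EuclideanSpace ℝ (Fin d) → ℝ)
    (K : EuclideanSpace ℝ (Fin d) → EuclideanSpace ℝ (Fin d) → ℝ)
    (lam : ℝ) (μ : MeasureTheory.Measure (EuclideanSpace ℝ (Fin d))) : Prop :=
  ∀ A : Set (EuclideanSpace ℝ (Fin d)), MeasurableSet A → A ⊆ S →
    (∫ x in A, r x ∂μ) + (∫ x in A, (∫ y in S, K y x ∂μ)) = lam * (μ A).toReal

/-- If μ is a nonzero r̄-eigenmeasure of r̃+J̃ (r̄ = max_S r), then the singular part of μ in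
its Lebesgue decomposition μ = μˢ + h·Leb is concentrated on Σ = {x ∈ S : r(x) = r̄}:
μˢ(S ∖ Σ) = 0. -/
theorem stmt9 {d : ℕ}
    (Ω S : Set (EuclideanSpace ℝ (Fin d)))
    (hΩne : Ω.Nonempty) (hΩopen : IsOpen Ω) (hΩbdd : Bornology.IsBounded Ω)
    (hΩconn : IsConnected Ω) (hSdef : S = closure Ω)
    (hScomp : IsCompact S) (hSvol : 0 < volume S)
    (r : EuclideanSpace ℝ (Fin d) → ℝ) (hr : ContinuousOn r S)
    (hrpos : ∀ x ∈ S, 0 < r x)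
    (K : EuclideanSpace ℝ (Fin d) → EuclideanSpace ℝ (Fin d) → ℝ)
    (hK : ContinuousOn (fun q : EuclideanSpace ℝ (Fin d) × EuclideanSpace ℝ (Fin d) =>
      K q.1 q.2) (S ×ˢ S))
    (hKnn : ∀ x ∈ S, ∀ y ∈ S, 0 ≤ K x y)
    (ε₀ c₀ : ℝ) (hε₀ : 0 < ε₀) (hc₀ : 0 < c₀)
    (hKlb : ∀ x ∈ S, ∀ y ∈ S, dist y x < ε₀ → c₀ < K x y)
    (μ : Measure (EuclideanSpace ℝ (Fin d))) [IsFiniteMeasure μ]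
    (hμne : μ ≠ 0) (hμS : μ Sᶜ = 0)
    (rbar : ℝ) (hrbar : IsGreatest (r '' S) rbar)
    (hμ : IsEigenmeasure S r K rbar μ) :
    μ.singularPart volume (S \ {x ∈ S | r x = rbar}) = 0 := by

  classical
  have hSclosed : IsClosed S := hSdef ▸ isClosed_closure
  have hSmeas : MeasurableSet S := hSclosed.measurableSet
  have hSigmaMeas : MeasurableSet {x ∈ S | r x = rbar} := by
    have h1 : IsClosed (S ∩ r ⁻¹' {rbar}) :=
      hr.preimage_isClosed_of_isClosed hSclosed isClosed_singleton
    have h2 : {x ∈ S | r x = rbar} = S ∩ r ⁻¹' {rbar} := by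
      ext x; simp [Set.mem_sep_iff, Set.mem_inter_iff, Set.mem_preimage]
    rw [h2]; exact h1.measurableSet
  obtain ⟨s, hsmeas, hμs, hvs⟩ := Measure.mutuallySingular_singularPart μ volume
  set A : Set (EuclideanSpace ℝ (Fin d)) := (S \ {x ∈ S | r x = rbar}) ∩ sᶜ with hA
  have hAmeas : MeasurableSet A := (hSmeas.diff hSigmaMeas).inter hsmeas.compl
  have hAS : A ⊆ S := fun x hx => hx.1.1
  have hAvol : volume A = 0 :=
    measure_mono_null (Set.inter_subset_right) hvs
  -- the key: μ A = 0
  have hμA : μ A = 0 := by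
    have heq := hμ A hAmeas hAS
    have hI2 : (∫ x in A, (∫ y in S, K y x ∂μ)) = 0 := by
      rw [Measure.restrict_eq_zero.mpr hAvol, integral_zero_measure]
    rw [hI2, add_zero] at heq
    -- integrability of r on A
    obtain ⟨C, hC⟩ := hScomp.exists_bound_of_continuousOn hr
    have hrae : AEMeasurable r (μ.restrict A) :=
      (hr.aemeasurable hSmeas).mono_measure (Measure.restrict_mono hAS le_rfl)
    have hint : Integrable r (μ.restrict A) := by
      refine Integrable.mono' (integrable_const C) hrae.aestronglyMeasurable ?_
      filter_upwards [ae_restrict_mem hAmeas] with x hx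
      exact hC x (hAS hx)
    have hintc : Integrable (fun _ : EuclideanSpace ℝ (Fin d) => rbar) (μ.restrict A) :=
      integrable_const _
    have hconst : (∫ _x in A, rbar ∂μ) = rbar * (μ A).toReal := by
      rw [setIntegral_const, smul_eq_mul, mul_comm]; rfl
    have hzero : (∫ x in A, (rbar - r x) ∂μ) = 0 := by
      rw [integral_sub hintc hint, hconst, heq, sub_self]
    have hnn : 0 ≤ᵐ[μ.restrict A] fun x => rbar - r x := by
      filter_upwards [ae_restrict_mem hAmeas] with x hx
      exact sub_nonneg.mpr (hrbar.2 ⟨x, hAS hx, rfl⟩)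
    have hae : (fun x => rbar - r x) =ᵐ[μ.restrict A] 0 :=
      (integral_eq_zero_iff_of_nonneg_ae hnn (hintc.sub hint)).mp hzero
    -- but rbar - r x ≠ 0 on A
    have hsub : A ⊆ {x | (fun x => rbar - r x) x ≠ 0} := by
      intro x hx
      have hxS : x ∈ S := hAS hx
      have hne : r x ≠ rbar := fun h => hx.1.2 ⟨hxS, h⟩
      simpa [sub_eq_zero] using fun h => hne h.symm
    have h0 : μ.restrict A {x | (fun x => rbar - r x) x ≠ 0} = 0 := hae
    have : μ.restrict A A = 0 := measure_mono_null hsub h0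
    rwa [Measure.restrict_apply_self] at this
  -- conclude
  have hle : μ.singularPart volume (S \ {x ∈ S | r x = rbar}) ≤
      μ.singularPart volume A + μ.singularPart volume s := by
    refine le_trans (measure_mono ?_) (measure_union_le _ _)
    intro x hx
    by_cases hxs : x ∈ s
    · exact Or.inr hxs
    · exact Or.inl ⟨hx, hxs⟩
  have h1 : μ.singularPart volume A ≤ μ A := Measure.singularPart_le μ volume A
  have h2 : μ.singularPart volume A = 0 := le_antisymm (h1.trans hμA.le) zero_le
  refine le_antisymm ?_ zero_le
  calc μ.singularPart volume (S \ {x ∈ S | r x = rbar})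
      ≤ μ.singularPart volume A + μ.singularPart volume s := hle
    _ = 0 := by rw [h2, hμs, add_zero]
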